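/- For every integer p ≥ 2, all coefficients of the polynomial ((t^{p(p+1)}-1)(t-1))/((t^{p+1}-1)(t^p-1)) lie in {-1, 0, 1}. -/

import Mathlib

open Polynomial Finset

namespace TKaux

-- p * j ↦ its residue mod p+1; applying twice gives back j (p² ≡ 1 mod p+1)
lemma rr {p : ℕ} (hp : 1 ≤ p) {j : ℕ} (hj : j < p + 1) :
    p * (p * j % (p + 1)) % (p + 1) = j := by
  have h1 : p * (p * j % (p + 1)) % (p + 1) = p * (p * j) % (p + 1) :=
    Nat.ModEq.mul_left p (Nat.mod_modEq _ _)
  obtain ⟨m, rfl⟩ : ∃ m, p = m + 1 := ⟨p - 1, (Nat.succ_pred_eq_of_pos hp).symm⟩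
  have h2 : (m+1) * ((m+1) * j) = (m+1+1) * (m*j) + j := by ring
  rw [h1, h2, Nat.mul_add_mod, Nat.mod_eq_of_lt hj]

noncomputable def S (p : ℕ) : Polynomial ℤ :=
  ∑ j ∈ range (p+1), ∑ i ∈ range (p*j/(p+1)), X ^ (p*j % (p+1) + i*(p+1))

-- the exponent set
def E (p : ℕ) : Finset ℕ :=
  ((range (p+1)).sigma (fun j => range (p*j/(p+1)))).image
    (fun x => p * x.1 % (p+1) + x.2 * (p+1))

lemma S_eq_sum_E {p : ℕ} (hp : 1 ≤ p) : S p = ∑ e ∈ E p, (X : Polynomial ℤ) ^ e := by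
  rw [E, Finset.sum_image, Finset.sum_sigma]
  · rfl
  · rintro ⟨j1, i1⟩ h1 ⟨j2, i2⟩ h2 heq
    simp only [Finset.mem_coe, Finset.mem_sigma, Finset.mem_range] at h1 h2
    have hr1 : p * j1 % (p+1) < p + 1 := Nat.mod_lt _ (Nat.succ_pos p)
    have hr2 : p * j2 % (p+1) < p + 1 := Nat.mod_lt _ (Nat.succ_pos p)
    have hmod : p * j1 % (p+1) = p * j2 % (p+1) := by
      have := congrArg (· % (p+1)) heq
      simpa [Nat.add_mul_mod_self_right, Nat.mod_eq_of_lt hr1, Nat.mod_eq_of_lt hr2] using this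
    dsimp only at heq
    have hb : i1 * (p+1) = i2 * (p+1) := by omega
    have hi : i1 = i2 := Nat.eq_of_mul_eq_mul_right (Nat.succ_pos p) hb
    have hj : j1 = j2 := by
      have := congrArg (fun x => p * x % (p+1)) hmod
      simpa [rr hp h1.1, rr hp h2.1] using this
    subst hj; subst hi; rfl

lemma coeff_S {p : ℕ} (hp : 1 ≤ p) (k : ℕ) :
    (S p).coeff k = if k ∈ E p then 1 else 0 := by
  rw [S_eq_sum_E hp, Polynomial.finset_sum_coeff]
  simp only [Polynomial.coeff_X_pow]
  exact Finset.sum_ite_eq (E p) k (fun _ => 1)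

-- per-j telescoping identity
lemma per_j (p j : ℕ) :
    (X : Polynomial ℤ) ^ (p*j) =
      X ^ (p*j % (p+1)) +
        (X^(p+1) - 1) * ∑ i ∈ range (p*j/(p+1)), X ^ (p*j % (p+1) + i*(p+1)) := by
  have h1 : ∑ i ∈ range (p*j/(p+1)), (X : Polynomial ℤ) ^ (p*j % (p+1) + i*(p+1))
      = X ^ (p*j % (p+1)) * ∑ i ∈ range (p*j/(p+1)), (X^(p+1))^i := by
    rw [Finset.mul_sum]
    refine Finset.sum_congr rfl fun i _ => ?_
    rw [pow_add, ← pow_mul, Nat.mul_comm i (p+1)]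
  rw [h1]
  have h2 : (X^(p+1) - 1) * (X ^ (p*j % (p+1)) * ∑ i ∈ range (p*j/(p+1)), ((X:Polynomial ℤ)^(p+1))^i)
      = X ^ (p*j % (p+1)) * ((X^(p+1))^(p*j/(p+1)) - 1) := by
    rw [← geom_sum_mul (X^(p+1) : Polynomial ℤ) (p*j/(p+1))]; ring
  rw [h2, ← pow_mul, mul_sub, mul_one, ← pow_add, Nat.mod_add_div]
  ring

lemma sum_r (p : ℕ) (hp : 1 ≤ p) :
    ∑ j ∈ range (p+1), (X : Polynomial ℤ) ^ (p*j % (p+1)) =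
      ∑ j ∈ range (p+1), (X : Polynomial ℤ) ^ j := by
  refine Finset.sum_nbij' (fun j => p*j % (p+1)) (fun j => p*j % (p+1)) ?_ ?_ ?_ ?_ ?_
  · intro a ha; exact Finset.mem_range.2 (Nat.mod_lt _ (Nat.succ_pos p))
  · intro a ha; exact Finset.mem_range.2 (Nat.mod_lt _ (Nat.succ_pos p))
  · intro a ha; exact rr hp (Finset.mem_range.1 ha)
  · intro a ha; exact rr hp (Finset.mem_range.1 ha)
  · intro a ha; rfl

noncomputable def Q (p : ℕ) : Polynomial ℤ := 1 + (X - 1) * S p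

lemma Q_mul (p : ℕ) (hp : 1 ≤ p) :
    Q p * (X^(p+1) - 1) = (X - 1) * ∑ j ∈ range (p+1), (X : Polynomial ℤ)^(p*j) := by
  have h1 : ∑ j ∈ range (p+1), (X : Polynomial ℤ)^(p*j)
      = (∑ j ∈ range (p+1), (X : Polynomial ℤ) ^ j) + (X^(p+1) - 1) * S p := by
    rw [← sum_r p hp, S, Finset.mul_sum, ← Finset.sum_add_distrib]
    exact Finset.sum_congr rfl (fun j _ => per_j p j)
  have h2 : (X - 1) * ∑ j ∈ range (p+1), (X : Polynomial ℤ) ^ j = X^(p+1) - 1 := by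
    rw [mul_comm, geom_sum_mul]
  rw [h1, mul_add, h2, Q]; ring

end TKaux

open TKaux in
theorem torus_knot_alexander_coeffs (p : ℕ) (hp : 2 ≤ p) (P : Polynomial ℤ)
    (hP : P * ((X ^ (p + 1) - 1) * (X ^ p - 1)) = (X ^ (p * (p + 1)) - 1) * (X - 1)) :
    ∀ k : ℕ, P.coeff k ∈ ({-1, 0, 1} : Set ℤ) := by
  have hp1 : 1 ≤ p := le_trans (by norm_num) hp
  have hQ : Q p * ((X ^ (p + 1) - 1) * (X ^ p - 1)) = (X ^ (p * (p + 1)) - 1) * (X - 1) := by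
    have h3 : (X ^ (p * (p+1)) - 1 : Polynomial ℤ)
        = (∑ j ∈ range (p+1), (X : Polynomial ℤ)^(p*j)) * (X^p - 1) := by
      rw [pow_mul]
      rw [← geom_sum_mul (X^p : Polynomial ℤ) (p+1)]
      congr 1
      exact Finset.sum_congr rfl fun j _ => (pow_mul X p j).symm
    rw [h3, ← mul_assoc, Q_mul p hp1]; ring
  have hM : ((X ^ (p + 1) - 1) * (X ^ p - 1) : Polynomial ℤ) ≠ 0 := by
    apply mul_ne_zero
    · have : (X ^ (p+1) - 1 : Polynomial ℤ).Monic := by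
        simpa using Polynomial.monic_X_pow_sub_C (1 : ℤ) (Nat.succ_ne_zero p)
      exact this.ne_zero
    · have : (X ^ p - 1 : Polynomial ℤ).Monic := by
        simpa using Polynomial.monic_X_pow_sub_C (1 : ℤ) (by omega : p ≠ 0)
      exact this.ne_zero
  have hPQ : P = Q p := mul_right_cancel₀ hM (hP.trans hQ.symm)
  intro k
  rw [hPQ, Q]
  have hS : ∀ m : ℕ, (S p).coeff m = 0 ∨ (S p).coeff m = 1 := by
    intro m; rw [coeff_S hp1]; split <;> simp
  have hexp : ((X - 1) * S p : Polynomial ℤ) = X * S p - S p := by ring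
  rw [Polynomial.coeff_add, hexp, Polynomial.coeff_sub]
  cases k with
  | zero =>
      have : (X * S p : Polynomial ℤ).coeff 0 = 0 := by
        rw [Polynomial.mul_coeff_zero, Polynomial.coeff_X_zero, zero_mul]
      rw [this]
      rcases hS 0 with h | h <;> simp [h]
  | succ n =>
      rw [Polynomial.coeff_X_mul]
      have h1 := hS n
      have h2 := hS (n+1)
      simp only [Polynomial.coeff_one, Set.mem_insert_iff, Set.mem_singleton_iff]
      rcases h1 with h1 | h1 <;> rcases h2 with h2 | h2 <;> simp [h1, h2]
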